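/- Let ℓ be an odd prime. The set of indices [GL₂(ℤ/ℓℤ) : G] over subgroups G of GL₂(ℤ/ℓℤ) that belong to the split Cartan C_s(ℓ) equals the set of positive integers divisible by ℓ(ℓ+1) and dividing ℓ(ℓ+1)(ℓ−1)²/q for some prime q dividing ℓ−1. -/

import Mathlib

open Matrix

abbrev GL2 (ℓ : ℕ) : Type := GL (Fin 2) (ZMod ℓ)

namespace Paper

/-- The underlying matrix of an element of `GL₂(ℤ/ℓℤ)`. -/
def mat {ℓ : ℕ} (g : GL2 ℓ) : Matrix (Fin 2) (Fin 2) (ZMod ℓ) := ↑g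

/-- The set of scalar matrices `Z(ℓ)`. -/
def ZSet (ℓ : ℕ) : Set (GL2 ℓ) :=
  { g | ∃ x : ZMod ℓ, mat g = x • (1 : Matrix (Fin 2) (Fin 2) (ZMod ℓ)) }

/-- The split Cartan `C_s(ℓ)`: invertible diagonal matrices. -/
def CsSet (ℓ : ℕ) : Set (GL2 ℓ) := { g | mat g 0 1 = 0 ∧ mat g 1 0 = 0 }

/-- The normalizer `N_s(ℓ)` of the split Cartan: diagonal and antidiagonal matrices. -/
def NsSet (ℓ : ℕ) : Set (GL2 ℓ) :=
  CsSet ℓ ∪ { g | mat g 0 0 = 0 ∧ mat g 1 1 = 0 }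

/-- The nonsplit Cartan `C_ns(ℓ)` relative to the nonsquare `ε`. -/
def CnsSet (ℓ : ℕ) (ε : ZMod ℓ) : Set (GL2 ℓ) :=
  { g | ∃ x y : ZMod ℓ, mat g = !![x, ε * y; y, x] }

/-- The normalizer `N_ns(ℓ)` of the nonsplit Cartan. -/
def NnsSet (ℓ : ℕ) (ε : ZMod ℓ) : Set (GL2 ℓ) :=
  CnsSet ℓ ε ∪ { g | ∃ x y : ZMod ℓ, mat g = !![x, -(ε * y); y, -x] }

/-- The ramified Cartan `C_r(ℓ)`. -/
def CrSet (ℓ : ℕ) : Set (GL2 ℓ) :=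
  { g | mat g 1 0 = 0 ∧ mat g 0 0 = mat g 1 1 }

/-- The Borel subgroup `B(ℓ)`: upper triangular matrices. -/
def BorelSet (ℓ : ℕ) : Set (GL2 ℓ) := { g | mat g 1 0 = 0 }

/-- `G` is conjugate in `GL₂(ℤ/ℓℤ)` to a subgroup of the set `M`. -/
def ConjSub {ℓ : ℕ} (G : Subgroup (GL2 ℓ)) (M : Set (GL2 ℓ)) : Prop :=
  ∃ a : GL2 ℓ, ∀ g ∈ G, a * g * a⁻¹ ∈ M

/-- `G` belongs to `Z(ℓ)`. -/
def BelongsZ {ℓ : ℕ} (G : Subgroup (GL2 ℓ)) : Prop := ConjSub G (ZSet ℓ)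

/-- `G` belongs to `C_s(ℓ)`. -/
def BelongsCs {ℓ : ℕ} (G : Subgroup (GL2 ℓ)) : Prop :=
  ConjSub G (CsSet ℓ) ∧ ¬ ConjSub G (ZSet ℓ)

/-- `G` belongs to `C_ns(ℓ)`. -/
def BelongsCns {ℓ : ℕ} (ε : ZMod ℓ) (G : Subgroup (GL2 ℓ)) : Prop :=
  ConjSub G (CnsSet ℓ ε) ∧ ¬ ConjSub G (ZSet ℓ)

/-- `G` belongs to `N_s(ℓ)`. -/
def BelongsNs {ℓ : ℕ} (G : Subgroup (GL2 ℓ)) : Prop :=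
  ConjSub G (NsSet ℓ) ∧ ¬ ConjSub G (CsSet ℓ)

/-- `G` belongs to `N_ns(ℓ)`. -/
def BelongsNns {ℓ : ℕ} (ε : ZMod ℓ) (G : Subgroup (GL2 ℓ)) : Prop :=
  ConjSub G (NnsSet ℓ ε) ∧ ¬ ConjSub G (CnsSet ℓ ε)

/-- `G` belongs to the ramified Cartan `C_r(ℓ)`. -/
def BelongsCr {ℓ : ℕ} (G : Subgroup (GL2 ℓ)) : Prop :=
  ConjSub G (CrSet ℓ) ∧ ¬ ConjSub G (ZSet ℓ)

/-- `H` is a twist of `G`: either `H = ⟨G, -I⟩`, or `H` is an index-2 subgroup of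
`⟨G, -I⟩` not containing `-I`. -/
def TwistOf {ℓ : ℕ} (G H : Subgroup (GL2 ℓ)) : Prop :=
  H = G ⊔ Subgroup.closure {(-1 : GL2 ℓ)} ∨
    (H ≤ G ⊔ Subgroup.closure {(-1 : GL2 ℓ)} ∧
      H.relIndex (G ⊔ Subgroup.closure {(-1 : GL2 ℓ)}) = 2 ∧
      (-1 : GL2 ℓ) ∉ H)

/-- `H` fixes a nonzero vector of `(ℤ/ℓℤ)²`. -/
def FixesVec {ℓ : ℕ} (H : Subgroup (GL2 ℓ)) : Prop :=
  ∃ v : Fin 2 → ZMod ℓ, v ≠ 0 ∧ ∀ h ∈ H, Matrix.mulVec (mat h) v = v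

end Paper
namespace StatementAux
open Paper

variable {ℓ : ℕ}

lemma mat_mul (g h : GL2 ℓ) : mat (g * h) = mat g * mat h := rfl
lemma mat_one : mat (1 : GL2 ℓ) = 1 := rfl
lemma mat_mul_inv (g : GL2 ℓ) : mat g * mat g⁻¹ = 1 := by
  rw [← mat_mul, mul_inv_cancel, mat_one]
lemma mat_inv_mul (g : GL2 ℓ) : mat g⁻¹ * mat g = 1 := by
  rw [← mat_mul, inv_mul_cancel, mat_one]

lemma one_mem_ZSet : (1 : GL2 ℓ) ∈ ZSet ℓ := ⟨1, by rw [mat_one, one_smul]⟩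

lemma zset_conj {a g : GL2 ℓ} (h : a * g * a⁻¹ ∈ ZSet ℓ) : g ∈ ZSet ℓ := by
  obtain ⟨x, hx⟩ := h
  refine ⟨x, ?_⟩
  have hg : g = a⁻¹ * (a * g * a⁻¹) * a := by group
  rw [hg, mat_mul, mat_mul, hx, mul_smul_comm, smul_mul_assoc, mul_one, mat_inv_mul]

section prime
variable [Fact (Nat.Prime ℓ)]

def Ds (ℓ : ℕ) [Fact (Nat.Prime ℓ)] : Subgroup (GL2 ℓ) where
  carrier := CsSet ℓ
  one_mem' := by
    constructor <;> · show (1 : Matrix (Fin 2) (Fin 2) (ZMod ℓ)) _ _ = 0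
                      simp [Matrix.one_apply]
  mul_mem' := by
    rintro g h ⟨hg1, hg2⟩ ⟨hh1, hh2⟩
    constructor <;> · rw [mat_mul]
                      simp [Matrix.mul_apply, Fin.sum_univ_two, hg1, hg2, hh1, hh2]
  inv_mem' := by
    rintro g ⟨h1, h2⟩
    have e1 := congrFun (congrFun (mat_inv_mul g) 0) 0
    have e4 := congrFun (congrFun (mat_inv_mul g) 1) 1
    have f1 := congrFun (congrFun (mat_mul_inv g) 0) 1
    have f2 := congrFun (congrFun (mat_mul_inv g) 1) 0
    simp [Matrix.mul_apply, Fin.sum_univ_two, Matrix.one_apply, h1, h2] at e1 e4 f1 f2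
    have ha : mat g 0 0 ≠ 0 := by
      intro h; rw [h] at e1; simp at e1
    have hb : mat g 1 1 ≠ 0 := by
      intro h; rw [h] at e4; simp at e4
    exact ⟨f1.resolve_left ha, f2.resolve_left hb⟩

set_option maxRecDepth 4000 in
def diagGL (a b : (ZMod ℓ)ˣ) : GL2 ℓ :=
  ⟨!![(a : ZMod ℓ), 0; 0, (b : ZMod ℓ)],
   !![((a⁻¹ : (ZMod ℓ)ˣ) : ZMod ℓ), 0; 0, ((b⁻¹ : (ZMod ℓ)ˣ) : ZMod ℓ)],
   by rw [Matrix.mul_fin_two]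
      simp only [mul_zero, zero_mul, add_zero, zero_add, Units.mul_inv, Units.inv_mul,
        Matrix.one_fin_two],
   by rw [Matrix.mul_fin_two]
      simp only [mul_zero, zero_mul, add_zero, zero_add, Units.mul_inv, Units.inv_mul,
        Matrix.one_fin_two]⟩

lemma mat_diagGL (a b : (ZMod ℓ)ˣ) :
    mat (diagGL a b) = !![(a : ZMod ℓ), 0; 0, (b : ZMod ℓ)] := rfl

def diagHom : (ZMod ℓ)ˣ × (ZMod ℓ)ˣ →* GL2 ℓ :=
  MonoidHom.mk' (fun p => diagGL p.1 p.2) (by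
    intro p q
    apply Units.ext
    show (_ : Matrix (Fin 2) (Fin 2) (ZMod ℓ)) = _
    rw [show ((diagGL p.1 p.2 * diagGL q.1 q.2 : GL2 ℓ) : Matrix (Fin 2) (Fin 2) (ZMod ℓ))
        = mat (diagGL p.1 p.2) * mat (diagGL q.1 q.2) from rfl]
    rw [mat_diagGL, mat_diagGL, Matrix.mul_fin_two]
    show mat (diagGL _ _) = _
    rw [mat_diagGL]
    simp)

lemma diagHom_injective : Function.Injective (diagHom (ℓ := ℓ)) := by
  intro p q h
  have h' : mat (diagGL p.1 p.2) = mat (diagGL q.1 q.2) := congrArg (Units.val) h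
  rw [mat_diagGL, mat_diagGL] at h'
  have h00 := congrFun (congrFun h' 0) 0
  have h11 := congrFun (congrFun h' 1) 1
  simp at h00 h11
  ext <;> simp [Units.ext_iff, h00, h11]

lemma diagHom_range : (diagHom (ℓ := ℓ)).range = Ds ℓ := by
  apply le_antisymm
  · rintro _ ⟨⟨a, b⟩, rfl⟩
    show diagGL a b ∈ CsSet ℓ
    constructor <;> simp [mat_diagGL]
  · rintro g ⟨h1, h2⟩
    have e1 := congrFun (congrFun (mat_inv_mul g) 0) 0
    have e4 := congrFun (congrFun (mat_inv_mul g) 1) 1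
    simp [Matrix.mul_apply, Fin.sum_univ_two, Matrix.one_apply, h1, h2] at e1 e4
    obtain ⟨u, hu⟩ : IsUnit (mat g 0 0) :=
      IsUnit.of_mul_eq_one _ (by rw [mul_comm] at e1; exact e1)
    obtain ⟨v, hv⟩ : IsUnit (mat g 1 1) :=
      IsUnit.of_mul_eq_one _ (by rw [mul_comm] at e4; exact e4)
    refine ⟨(u, v), ?_⟩
    apply Units.ext
    show mat (diagGL _ _) = mat g
    rw [mat_diagGL]
    conv_rhs => rw [Matrix.eta_fin_two (mat g)]
    rw [h1, h2, hu, hv]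

lemma card_units' : Nat.card (ZMod ℓ)ˣ = ℓ - 1 := by
  rw [Nat.card_eq_fintype_card, ZMod.card_units_eq_totient,
    Nat.totient_prime (Fact.out : Nat.Prime ℓ)]

lemma card_Ds : Nat.card (Ds ℓ) = (ℓ - 1) ^ 2 := by
  rw [← diagHom_range, MonoidHom.range_eq_map,
    Nat.card_congr (Subgroup.equivMapOfInjective ⊤ _ diagHom_injective).toEquiv.symm,
    Nat.card_congr Subgroup.topEquiv.toEquiv, Nat.card_prod, card_units']
  ring

lemma card_GL2 : Nat.card (GL2 ℓ) = ℓ * (ℓ + 1) * (ℓ - 1) ^ 2 := by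
  rw [Matrix.card_GL_field, ZMod.card ℓ, Fin.prod_univ_two]
  have h3 : 2 ≤ ℓ := (Fact.out : Nat.Prime ℓ).two_le
  obtain ⟨k, rfl⟩ : ∃ k, ℓ = k + 1 := ⟨ℓ - 1, by omega⟩
  simp only [Fin.isValue, Fin.val_zero, Fin.val_one, pow_zero, pow_one, Nat.add_sub_cancel]
  have a : (k + 1) ^ 2 = k ^ 2 + 2 * k + 1 := by ring
  rw [a]
  have b1 : k ^ 2 + 2 * k + 1 - 1 = k ^ 2 + 2 * k := by omega
  have b2 : k ^ 2 + 2 * k + 1 - (k + 1) = k ^ 2 + k := by omega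
  rw [b1, b2]
  ring

end prime

lemma split_dvd_sq {d a : ℕ} (ha : 0 < a) (hd : d ∣ a ^ 2) :
    ∃ d₁ d₂, d₁ ∣ a ∧ d₂ ∣ a ∧ d₁ * d₂ = d := by
  have hd0 : 0 < d := Nat.pos_of_dvd_of_pos hd (by positivity)
  have hg0 : 0 < Nat.gcd d a := Nat.gcd_pos_of_pos_left _ hd0
  set g := Nat.gcd d a with hg
  refine ⟨g, d / g, Nat.gcd_dvd_right d a, ?_, Nat.mul_div_cancel' (Nat.gcd_dvd_left d a)⟩
  have hco : Nat.Coprime (d / g) (a / g) := Nat.coprime_div_gcd_div_gcd hg0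
  have h1 : d / g ∣ a * (a / g) := by
    have h2 : g * (d / g) ∣ g * (a * (a / g)) := by
      rw [Nat.mul_div_cancel' (Nat.gcd_dvd_left d a), mul_left_comm,
        Nat.mul_div_cancel' (Nat.gcd_dvd_right d a)]
      simpa [pow_two] using hd
    exact (mul_dvd_mul_iff_left hg0.ne').mp h2
  exact hco.dvd_of_dvd_mul_right h1

lemma exists_subgroup_card {α : Type*} [Group α] [Finite α] (x : α) {n d : ℕ}
    (hx : orderOf x = n) (hn : n ≠ 0) (hd : d ∣ n) :
    ∃ H : Subgroup α, Nat.card H = d := by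
  refine ⟨Subgroup.zpowers (x ^ (n / d)), ?_⟩
  rw [Nat.card_zpowers, orderOf_pow, hx, Nat.gcd_eq_right (Nat.div_dvd_of_dvd hd),
    Nat.div_div_self hd hn]


end StatementAux

open StatementAux Paper

theorem statement_3 (ℓ : ℕ) (hℓ : Nat.Prime ℓ) (hodd : Odd ℓ) :
    { n : ℕ | ∃ G : Subgroup (GL2 ℓ), Paper.BelongsCs G ∧ G.index = n } =
      { n : ℕ | 0 < n ∧ ℓ * (ℓ + 1) ∣ n ∧
        ∃ q : ℕ, q.Prime ∧ q ∣ (ℓ - 1) ∧ n ∣ ℓ * (ℓ + 1) * (ℓ - 1) ^ 2 / q } := by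
  haveI : Fact (Nat.Prime ℓ) := ⟨hℓ⟩
  have hl3 : 3 ≤ ℓ := by
    have h2 := hℓ.two_le
    have := Nat.odd_iff.mp hodd
    omega
  have hNpos : 0 < ℓ * (ℓ + 1) * (ℓ - 1) ^ 2 := by
    apply Nat.mul_pos (Nat.mul_pos (by omega) (by omega))
    have : 0 < ℓ - 1 := by omega
    positivity
  ext n
  simp only [Set.mem_setOf_eq]
  constructor
  · rintro ⟨G, ⟨⟨a, ha⟩, hnz⟩, rfl⟩
    have hN : Nat.card G * G.index = ℓ * (ℓ + 1) * (ℓ - 1) ^ 2 := by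
      rw [Subgroup.card_mul_index, card_GL2]
    -- conjugate subgroup inside Ds
    have hle : G.map (MulAut.conj a).toMonoidHom ≤ Ds ℓ := by
      rintro x ⟨g, hg, rfl⟩
      exact ha g hg
    have hcard' : Nat.card (G.map (MulAut.conj a).toMonoidHom) = Nat.card G :=
      (Nat.card_congr (Subgroup.equivMapOfInjective G _ (MulAut.conj a).injective).toEquiv).symm
    have hdvd : Nat.card G ∣ (ℓ - 1) ^ 2 := by
      rw [← hcard', ← card_Ds (ℓ := ℓ)]
      exact Subgroup.card_dvd_of_le hle
    have hG1 : Nat.card G ≠ 1 := by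
      intro h
      apply hnz
      refine ⟨1, fun g hg => ?_⟩
      have hb : G = ⊥ := Subgroup.card_eq_one.mp h
      rw [hb, Subgroup.mem_bot] at hg
      subst hg
      simpa using one_mem_ZSet
    have hGpos : 0 < Nat.card G := Nat.card_pos
    obtain ⟨q, hq, hqd⟩ := Nat.exists_prime_and_dvd hG1
    have hipos : 0 < G.index := by
      rcases Nat.eq_zero_or_pos G.index with h | h
      · rw [h, mul_zero] at hN; omega
      · exact h
    refine ⟨hipos, ?_, q, hq, ?_, ?_⟩
    · obtain ⟨k, hk⟩ := hdvd
      have : Nat.card G * G.index = Nat.card G * (ℓ * (ℓ + 1) * k) := by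
        rw [hN, hk]; ring
      have := Nat.eq_of_mul_eq_mul_left hGpos this
      exact ⟨k, this⟩
    · exact hq.dvd_of_dvd_pow (hqd.trans hdvd)
    · obtain ⟨m, hm⟩ := hqd
      have : ℓ * (ℓ + 1) * (ℓ - 1) ^ 2 / q = m * G.index := by
        rw [← hN, hm, mul_assoc, Nat.mul_div_cancel_left _ hq.pos]
      rw [this]
      exact Dvd.intro_left m rfl
  · rintro ⟨hn0, hdvd1, q, hq, hqℓ, hndvd⟩
    have hqN : q ∣ ℓ * (ℓ + 1) * (ℓ - 1) ^ 2 :=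
      Dvd.dvd.mul_left (hqℓ.trans (dvd_pow_self (ℓ - 1) two_ne_zero)) _
    obtain ⟨m, hm⟩ := hndvd
    have hNq : ℓ * (ℓ + 1) * (ℓ - 1) ^ 2 = q * (n * m) := by
      rw [← hm, Nat.mul_div_cancel' hqN]
    have hm0 : 0 < m := by
      rcases Nat.eq_zero_or_pos m with h | h
      · rw [h, mul_zero, mul_zero] at hNq; omega
      · exact h
    set d := q * m with hd
    have hNd : ℓ * (ℓ + 1) * (ℓ - 1) ^ 2 = n * d := by rw [hNq, hd]; ring
    have hd2 : 2 ≤ d := by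
      have := hq.two_le
      calc 2 ≤ q := this
        _ = q * 1 := (mul_one q).symm
        _ ≤ q * m := Nat.mul_le_mul_left q hm0
    have hdsq : d ∣ (ℓ - 1) ^ 2 := by
      obtain ⟨k, hk⟩ := hdvd1
      have h1 : ℓ * (ℓ + 1) * (ℓ - 1) ^ 2 = ℓ * (ℓ + 1) * (k * d) := by
        rw [hNd, hk]; ring
      have h2 := Nat.eq_of_mul_eq_mul_left (Nat.mul_pos (by omega) (by omega)) h1
      exact ⟨k, by rw [h2]; ring⟩
    obtain ⟨d₁, d₂, hd₁, hd₂, h12⟩ := split_dvd_sq (show 0 < ℓ - 1 by omega) hdsq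
    obtain ⟨g, hg⟩ := IsCyclic.exists_ofOrder_eq_natCard (α := (ZMod ℓ)ˣ)
    have hord : orderOf g = ℓ - 1 := hg.trans card_units'
    have hne : ℓ - 1 ≠ 0 := by omega
    obtain ⟨H₁, hH₁⟩ := exists_subgroup_card g hord hne hd₁
    obtain ⟨H₂, hH₂⟩ := exists_subgroup_card g hord hne hd₂
    refine ⟨(H₁.prod H₂).map diagHom, ⟨⟨⟨1, fun x hx => ?_⟩, ?_⟩, ?_⟩⟩
    · simp only [one_mul, inv_one, mul_one]
      have : x ∈ Ds ℓ := diagHom_range (ℓ := ℓ) ▸ Subgroup.map_le_range diagHom _ hx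
      exact this
    · -- not conjugate into scalars
      rintro ⟨a, hZ⟩
      have hcases : 1 < d₁ ∨ 1 < d₂ := by
        by_contra hcon
        push_neg at hcon
        have : d₁ * d₂ ≤ 1 * 1 := Nat.mul_le_mul hcon.1 hcon.2
        rw [h12, mul_one] at this
        omega
      have key : ∀ u v : (ZMod ℓ)ˣ, (u, v) ∈ H₁.prod H₂ → ¬ ((u : ZMod ℓ) ≠ (v : ZMod ℓ)) →
          True := fun _ _ _ _ => trivial
      rcases hcases with hh | hh
      · have hne₁ : H₁ ≠ ⊥ := by
          intro hb
          rw [hb] at hH₁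
          rw [Subgroup.card_eq_one.mpr rfl] at hH₁
          omega
        obtain ⟨u, hu, hu1⟩ := (H₁.bot_or_exists_ne_one).resolve_left hne₁
        have hwG : diagHom (u, 1) ∈ (H₁.prod H₂).map diagHom :=
          ⟨(u, 1), Subgroup.mem_prod.mpr ⟨hu, one_mem _⟩, rfl⟩
        obtain ⟨x, hx⟩ := zset_conj (hZ _ hwG)
        have hx' : mat (diagGL u 1) = x • 1 := hx
        rw [mat_diagGL] at hx'
        have h00 := congrFun (congrFun hx' 0) 0
        have h11 := congrFun (congrFun hx' 1) 1
        simp [Matrix.smul_apply, Matrix.one_apply] at h00 h11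
        exact hu1 (Units.val_eq_one.mp (by rw [h00, ← h11]))
      · have hne₂ : H₂ ≠ ⊥ := by
          intro hb
          rw [hb] at hH₂
          rw [Subgroup.card_eq_one.mpr rfl] at hH₂
          omega
        obtain ⟨v, hv, hv1⟩ := (H₂.bot_or_exists_ne_one).resolve_left hne₂
        have hwG : diagHom (1, v) ∈ (H₁.prod H₂).map diagHom :=
          ⟨(1, v), Subgroup.mem_prod.mpr ⟨one_mem _, hv⟩, rfl⟩
        obtain ⟨x, hx⟩ := zset_conj (hZ _ hwG)
        have hx' : mat (diagGL 1 v) = x • 1 := hx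
        rw [mat_diagGL] at hx'
        have h00 := congrFun (congrFun hx' 0) 0
        have h11 := congrFun (congrFun hx' 1) 1
        simp [Matrix.smul_apply, Matrix.one_apply] at h00 h11
        exact hv1 (Units.val_eq_one.mp (by rw [h11, ← h00]))
    · -- index computation
      have hcardG : Nat.card ((H₁.prod H₂).map diagHom) = d := by
        rw [(Nat.card_congr (Subgroup.equivMapOfInjective _ _ diagHom_injective).toEquiv).symm,
          Nat.card_congr (Subgroup.prodEquiv H₁ H₂).toEquiv, Nat.card_prod, hH₁, hH₂, h12]
      have hNix : Nat.card ((H₁.prod H₂).map diagHom) *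
          ((H₁.prod H₂).map diagHom).index = ℓ * (ℓ + 1) * (ℓ - 1) ^ 2 := by
        rw [Subgroup.card_mul_index, card_GL2]
      rw [hcardG, hNd] at hNix
      have : d * ((H₁.prod H₂).map diagHom).index = d * n := by rw [hNix]; ring
      exact Nat.eq_of_mul_eq_mul_left (by omega) this
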